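/- Let M be the quotient of the monoid with zero WithZero (FreeMonoid (Fin 2)) by the congruence generated by the two pairs (x*y, 0) and (x*x, 0), where x and y denote the images of the two generators. Then M cannot be represented as a finite union of monogenic subsemigroups: there is no finite list of elements m_1, …, m_k ∈ M with M = ⋃_{i=1}^k {m_i^n : n ∈ ℕ}. -/

import Mathlib

/-- Normal-form model: `zero`, or `elem a b` representing `y^a * x^b` (b a Bool). -/
inductive M0 where
  | zero : M0
  | elem : ℕ → Bool → M0
  deriving DecidableEq

namespace M0

def mul : M0 → M0 → M0
  | elem a false, elem c d => elem (a + c) d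
  | elem a true, elem 0 false => elem a true
  | _, _ => zero

instance : Mul M0 := ⟨mul⟩
instance : One M0 := ⟨elem 0 false⟩
instance : Zero M0 := ⟨zero⟩

lemma mul_def (u v : M0) : u * v = mul u v := rfl

lemma one_def : (1 : M0) = elem 0 false := rfl
lemma zero_def : (0 : M0) = zero := rfl

instance : MonoidWithZero M0 where
  mul_assoc u v w := by
    rcases u with _ | ⟨a, _ | _⟩ <;> rcases v with _ | ⟨c, _ | _⟩ <;>
      rcases w with _ | ⟨e, _ | _⟩ <;>
      first
      | rfl
      | (rcases c with _ | c <;> rcases e with _ | e <;>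
          simp [mul_def, mul] <;> omega)
      | (rcases c with _ | c <;> simp [mul_def, mul] <;> omega)
      | (rcases e with _ | e <;> simp [mul_def, mul] <;> omega)
      | (simp [mul_def, mul] <;> omega)
  one_mul u := by
    rcases u with _ | ⟨a, b⟩ <;> simp [one_def, mul_def, mul]
  mul_one u := by
    rcases u with _ | ⟨a, _ | _⟩ <;> simp [one_def, mul_def, mul]
  zero_mul u := by rcases u with _ | ⟨a, _ | _⟩ <;> rfl
  mul_zero u := by rcases u with _ | ⟨a, _ | _⟩ <;> rfl

lemma elem_false_pow (a : ℕ) : ∀ n : ℕ, (elem a false) ^ n = elem (a * n) false := by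
  intro n
  induction n with
  | zero => rfl
  | succ n ih => rw [pow_succ, ih]; show mul _ _ = _; simp [mul, Nat.mul_succ]

lemma elem_true_pow_ge_two (a : ℕ) (n : ℕ) (hn : 2 ≤ n) : (elem a true) ^ n = zero := by
  obtain ⟨m, rfl⟩ : ∃ m, n = m + 2 := ⟨n - 2, by omega⟩
  rw [pow_add, pow_two]
  have h2 : (elem a true) * (elem a true) = 0 := by
    rcases a with _ | a <;> rfl
  rw [h2, mul_zero, zero_def]

lemma pow_eq_elem_true {u : M0} {n k : ℕ} (h : u ^ n = elem k true) :
    n = 1 ∧ u = elem k true := by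
  rcases u with _ | ⟨a, _ | _⟩
  · rcases n with _ | n
    · rw [pow_zero, one_def] at h; simp at h
    · rw [pow_succ, ← zero_def, mul_zero, zero_def] at h; simp at h
  · rw [elem_false_pow] at h; simp at h
  · rcases n with _ | _ | n
    · rw [pow_zero, one_def] at h; simp at h
    · rw [pow_one] at h; exact ⟨rfl, h⟩
    · rw [elem_true_pow_ge_two a _ (by omega), ← zero_def] at h
      rw [zero_def] at h; simp at h

end M0

theorem monoid_M_not_finite_union_of_monogenic
    (c : Con (WithZero (FreeMonoid (Fin 2))))
    (hc : c = conGen fun p q =>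
      (p = (↑(FreeMonoid.of (0 : Fin 2) * FreeMonoid.of (1 : Fin 2)) :
          WithZero (FreeMonoid (Fin 2))) ∧ q = 0) ∨
      (p = (↑(FreeMonoid.of (0 : Fin 2) * FreeMonoid.of (0 : Fin 2)) :
          WithZero (FreeMonoid (Fin 2))) ∧ q = 0)) :
    ¬ ∃ (k : ℕ) (m : Fin k → c.Quotient),
      (Set.univ : Set c.Quotient) = ⋃ i, Set.range fun n : ℕ => (m i) ^ n := by
  classical
  -- the monoid hom to the normal-form model
  set g : FreeMonoid (Fin 2) →* M0 :=
    FreeMonoid.lift (fun i => if i = 0 then M0.elem 0 true else M0.elem 1 false) with hg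
  set f : WithZero (FreeMonoid (Fin 2)) →*₀ M0 := WithZero.lift' g with hf
  have hgx : g (FreeMonoid.of (0 : Fin 2)) = M0.elem 0 true := by simp [hg]
  have hgy : g (FreeMonoid.of (1 : Fin 2)) = M0.elem 1 false := by simp [hg]
  have hcoe : ∀ z, f.toMonoidHom z = f z := fun _ => rfl
  have hle : c ≤ Con.ker f.toMonoidHom := by
    rw [hc]
    apply (Con.conGen_le).2
    rintro p q (⟨rfl, rfl⟩ | ⟨rfl, rfl⟩) <;>
    · rw [Con.ker_rel]
      simp only [hcoe, hf, WithZero.lift'_coe, map_mul, map_zero, hgx, hgy]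
      rfl
  set F : c.Quotient →* M0 := c.lift f.toMonoidHom hle with hF
  have hFcoe : ∀ w : FreeMonoid (Fin 2),
      F ((↑(w : WithZero (FreeMonoid (Fin 2))) : c.Quotient)) = g w := by
    intro w
    show c.lift f.toMonoidHom hle _ = _
    rw [Con.lift_coe]
    simp [hf]
  rintro ⟨K, m, hm⟩
  -- the witnesses y^k * x
  set e : ℕ → c.Quotient := fun k =>
    ((↑(↑(FreeMonoid.of (1 : Fin 2) ^ k * FreeMonoid.of (0 : Fin 2)) :
      WithZero (FreeMonoid (Fin 2))) : c.Quotient)) with he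
  have hFe : ∀ k, F (e k) = M0.elem k true := by
    intro k
    rw [he]
    simp only [hFcoe, map_mul, map_pow, hgx, hgy]
    rw [M0.elem_false_pow]
    show M0.mul _ _ = _
    simp [M0.mul]
  -- pick indices
  have hmem : ∀ k : ℕ, ∃ i : Fin K, ∃ n : ℕ, (m i) ^ n = e k := by
    intro k
    have : e k ∈ (Set.univ : Set c.Quotient) := Set.mem_univ _
    rw [hm] at this
    simpa using this
  choose idx n hidx using hmem
  have hinj : Function.Injective idx := by
    intro k k' hkk'
    have h1 : F (m (idx k)) ^ (n k) = M0.elem k true := by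
      rw [← map_pow, hidx, hFe]
    have h2 : F (m (idx k)) ^ (n k') = M0.elem k' true := by
      rw [hkk', ← map_pow, hidx, hFe]
    have e1 := M0.pow_eq_elem_true h1
    have e2 := M0.pow_eq_elem_true h2
    have := e1.2.symm.trans e2.2
    injection this
  obtain ⟨k, k', hne, heq⟩ := Finite.exists_ne_map_eq_of_infinite idx
  exact hne (hinj heq)
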